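/- Let C ⊆ ℕ^d be a finitely generated integer cone, P ⊂ ℕ^d finite with 0 ∉ P and P ∩ C ≠ ∅, ⪯ a monomial order with {m ∈ C : m ≺ f} finite for all f ∈ C, and f ∈ C \ {0}. Then Δ(f) = {x ∈ C : x ≻ f} ∪ {0} is a P-semigroup. -/
import Mathlib


/-- A monomial order on `ℕ^d`: a total order compatible with addition,
with `0` as least element. -/
def IsMonomialOrder (d : ℕ) (le : (Fin d → ℕ) → (Fin d → ℕ) → Prop) : Prop :=
  (∀ a, le a a) ∧ (∀ a b, le a b → le b a → a = b) ∧
  (∀ a b c, le a b → le b c → le a c) ∧ (∀ a b, le a b ∨ le b a) ∧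
  (∀ a b c, le a b → le (a + c) (b + c)) ∧ (∀ a, le 0 a)

/-- `S` is a `C`-semigroup: a submonoid of the cone `C` with finite complement in `C`. -/
def IsCSgp {d : ℕ} (C : AddSubmonoid (Fin d → ℕ)) (S : Set (Fin d → ℕ)) : Prop :=
  0 ∈ S ∧ (∀ x ∈ S, ∀ y ∈ S, x + y ∈ S) ∧ S ⊆ (C : Set (Fin d → ℕ)) ∧
    ((C : Set (Fin d → ℕ)) \ S).Finite

/-- `S` is a `P`-semigroup: for every nonzero `s ∈ S` there is `p ∈ P` with `s + p ∈ S`. -/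
def IsPSgp {d : ℕ} (P : Set (Fin d → ℕ)) (S : Set (Fin d → ℕ)) : Prop :=
  ∀ s ∈ S, s ≠ 0 → ∃ p ∈ P, s + p ∈ S

/-- `a` is a minimal generator of `S`. -/
def IsMinGen {d : ℕ} (S : Set (Fin d → ℕ)) (a : Fin d → ℕ) : Prop :=
  a ∈ S ∧ a ≠ 0 ∧ ¬ ∃ x ∈ S, ∃ y ∈ S, x ≠ 0 ∧ y ≠ 0 ∧ a = x + y

theorem stmt_4 {d : ℕ} (C : AddSubmonoid (Fin d → ℕ)) (hCfg : C.FG)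
    (P : Set (Fin d → ℕ)) (hPfin : P.Finite) (hP0 : (0 : Fin d → ℕ) ∉ P)
    (hPC : (P ∩ (C : Set (Fin d → ℕ))).Nonempty)
    (le : (Fin d → ℕ) → (Fin d → ℕ) → Prop) (hle : IsMonomialOrder d le)
    (hlow : ∀ f ∈ (C : Set (Fin d → ℕ)),
      {m ∈ (C : Set (Fin d → ℕ)) | le m f ∧ m ≠ f}.Finite)
    (f : Fin d → ℕ) (hf : f ∈ (C : Set (Fin d → ℕ))) (hf0 : f ≠ 0) :
    IsPSgp P ({x ∈ (C : Set (Fin d → ℕ)) | le f x ∧ x ≠ f} ∪ {0}) := by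
  obtain ⟨_, hanti, htrans, _, hadd, hzero⟩ := hle
  obtain ⟨p, hpP, hpC⟩ := hPC
  intro s hs hs0
  rcases hs with hs | hs
  · obtain ⟨hsC, hfs, hsf⟩ := hs
    refine ⟨p, hpP, Or.inl ⟨C.add_mem hsC hpC, ?_, ?_⟩⟩
    · have h1 : le s (s + p) := by
        have := hadd 0 p s (hzero p)
        simpa [add_comm] using this
      exact htrans _ _ _ hfs h1
    · intro h
      apply hsf
      have h1 : le s (s + p) := by
        have := hadd 0 p s (hzero p)
        simpa [add_comm] using this
      exact hanti _ _ (h ▸ h1) hfs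
  · exact absurd hs hs0
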